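/- Let H be a graph with no isolated vertices, let G be a p-degenerate simple graph on n vertices, let h ≥ 1 and γ ∈ (0,1), and let 𝒞 be a collection of pairwise edge-disjoint copies of H in G. Then there exists a subcollection 𝒞' ⊆ 𝒞 with |𝒞'| ≥ |𝒞| − 2·γ·p·n such that every vertex v with deg_G(v) ≥ h that belongs to at least one member of 𝒞' belongs to at least γ·deg_G(v) members of 𝒞'. -/
import Mathlib


open Finset SimpleGraph
open scoped Classical

/-- `f : A → V` realizes a copy of `H` in `G`: it is injective and maps edges of `H`
to edges of `G`.  The copy itself is the subgraph of `G` whose edge set is the image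
of the edge set of `H`. -/
def IsCopy {A V : Type*} (H : SimpleGraph A) (G : SimpleGraph V) (f : A → V) : Prop :=
  Function.Injective f ∧ ∀ a b : A, H.Adj a b → G.Adj (f a) (f b)

/-- `G` contains a copy of `H` (a subgraph isomorphic to `H`). -/
def ContainsCopy {A V : Type*} (H : SimpleGraph A) (G : SimpleGraph V) : Prop :=
  ∃ f : A → V, IsCopy H G f

/-- The edge set of the copy of `H` in `G` realized by `f`. -/
noncomputable def copyEdges {A V : Type*} [Fintype A] [DecidableEq V]
    (H : SimpleGraph A) (f : A → V) : Finset (Sym2 V) :=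
  H.edgeFinset.image (Sym2.map f)

/-- `𝒞` is a collection of pairwise edge-disjoint copies of `H` in `G`. -/
def EdgeDisjointCopies {A V : Type*} [Fintype A] [DecidableEq V]
    (H : SimpleGraph A) (G : SimpleGraph V) (𝒞 : Finset (A → V)) : Prop :=
  (∀ f ∈ 𝒞, IsCopy H G f) ∧
    ∀ f ∈ 𝒞, ∀ g ∈ 𝒞, f ≠ g → Disjoint (copyEdges H f) (copyEdges H g)

/-- `G` is `p`-degenerate: every nonempty finite vertex set `U` contains a vertex with
at most `p` neighbours inside `U`. -/
def Degenerate {V : Type*} (G : SimpleGraph V) (p : ℕ) : Prop :=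
  ∀ U : Finset V, U.Nonempty → ∃ v ∈ U, (U.filter fun u => G.Adj v u).card ≤ p

/-- `G` is `c`-far (in absolute number of edges) from being `H`-free: deleting any set
of at most `c` edges from `G` leaves a graph that contains a copy of `H`. -/
def FarFromFree {A V : Type*} (H : SimpleGraph A) (G : SimpleGraph V) (c : ℝ) : Prop :=
  ∀ D : Finset (Sym2 V), (D.card : ℝ) ≤ c → ContainsCopy H (G.deleteEdges ↑D)

/-- The number of members of the collection `𝒦` whose copy contains the vertex `v`. -/
noncomputable def collDeg {A V : Type*} (𝒦 : Finset (A → V)) (v : V) : ℕ :=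
  (𝒦.filter fun φ => v ∈ Set.range φ).card

/-- Given a collection `𝒞` of pairwise edge-disjoint copies of `H` (a
graph without isolated vertices) in a `p`-degenerate graph `G` on `n` vertices, one can
prune `𝒞` to a subcollection `𝒞'` of size at least `|𝒞| − 2·γ·p·n` in which every vertex
of degree at least `h` that appears in some member appears in at least `γ·deg(v)` members. -/
lemma degen_sum {V : Type*} [DecidableEq V] (G : SimpleGraph V) (p : ℕ)
    (hdeg : Degenerate G p) :
    ∀ k (U : Finset V), U.card = k →
      (∑ v ∈ U, (U.filter fun u => G.Adj v u).card) ≤ 2 * p * k := by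
  intro k
  induction k using Nat.strong_induction_on with
  | _ k ih =>
    intro U hU
    rcases Nat.eq_zero_or_pos k with hk | hk
    · subst hk
      rw [Finset.card_eq_zero] at hU
      subst hU; simp
    · have hne : U.Nonempty := Finset.card_pos.mp (hU ▸ hk)
      obtain ⟨v, hvU, hvp⟩ := hdeg U hne
      set U' := U.erase v with hU'
      have hcard' : U'.card = k - 1 := by rw [hU', Finset.card_erase_of_mem hvU, hU]
      have hsplit : (∑ u ∈ U, (U.filter fun w => G.Adj u w).card)
          = (U.filter fun w => G.Adj v w).card
            + ∑ u ∈ U', (U.filter fun w => G.Adj u w).card := by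
        rw [hU', ← Finset.add_sum_erase U _ hvU]
      have hterm : ∀ u ∈ U', (U.filter fun w => G.Adj u w).card
          = (U'.filter fun w => G.Adj u w).card + (if G.Adj u v then 1 else 0) := by
        intro u hu
        have hins : U = insert v U' := (Finset.insert_erase hvU).symm
        rw [hins, Finset.filter_insert]
        split_ifs with hadj
        · rw [Finset.card_insert_of_notMem (by simp [hU'])]
        · simp
      have hsum2 : ∑ u ∈ U', (U.filter fun w => G.Adj u w).card
          = (∑ u ∈ U', (U'.filter fun w => G.Adj u w).card)
            + (U'.filter fun u => G.Adj u v).card := by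
        rw [Finset.sum_congr rfl hterm, Finset.sum_add_distrib]
        simp [Finset.sum_boole]
      have hback : (U'.filter fun u => G.Adj u v).card ≤ p := by
        calc (U'.filter fun u => G.Adj u v).card
            ≤ (U.filter fun u => G.Adj v u).card := by
              apply Finset.card_le_card
              intro u hu
              simp only [Finset.mem_filter] at hu ⊢
              exact ⟨Finset.erase_subset _ _ hu.1, hu.2.symm⟩
          _ ≤ p := hvp
      have hIH : (∑ u ∈ U', (U'.filter fun w => G.Adj u w).card) ≤ 2 * p * (k - 1) :=
        ih (k - 1) (by omega) U' hcard'
      have : 2 * p * (k - 1) + p + p ≤ 2 * p * k := by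
        have : k - 1 + 1 = k := by omega
        nlinarith [Nat.sub_add_cancel hk]
      omega


lemma prune_aux {A V : Type*} [Fintype V]
    (G : SimpleGraph V) (h : ℕ) (γ : ℝ) :
    ∀ k (𝒞 : Finset (A → V)), 𝒞.card = k →
      ∃ 𝒞' ⊆ 𝒞, ∃ S : Finset V,
        (∀ v ∈ S, ∃ f ∈ 𝒞, v ∈ Set.range f) ∧
        ((𝒞.card : ℝ) - (𝒞'.card : ℝ) ≤ γ * ∑ v ∈ S, (G.degree v : ℝ)) ∧
        ∀ v : V, h ≤ G.degree v → (∃ f ∈ 𝒞', v ∈ Set.range f) →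
          γ * G.degree v ≤ ((𝒞'.filter fun f => v ∈ Set.range f).card : ℝ) := by
  intro k
  induction k using Nat.strong_induction_on with
  | _ k ih =>
    intro 𝒞 hk
    by_cases hbad : ∃ v : V, h ≤ G.degree v ∧ (∃ f ∈ 𝒞, v ∈ Set.range f) ∧
        ((𝒞.filter fun f => v ∈ Set.range f).card : ℝ) < γ * G.degree v
    · obtain ⟨v, hvh, ⟨f₀, hf₀, hvf₀⟩, hvlt⟩ := hbad
      set B := 𝒞.filter fun f => v ∈ Set.range f with hB
      have hBsub : B ⊆ 𝒞 := Finset.filter_subset _ _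
      have hBne : B.Nonempty := ⟨f₀, Finset.mem_filter.mpr ⟨hf₀, hvf₀⟩⟩
      set 𝒞₂ := 𝒞 \ B with h𝒞₂
      have hcard₂ : 𝒞₂.card = k - B.card := by
        rw [h𝒞₂, Finset.card_sdiff_of_subset hBsub, hk]
      have hBpos : 0 < B.card := Finset.card_pos.mpr hBne
      have hkpos : 0 < k := hk ▸ Finset.card_pos.mpr ⟨f₀, hf₀⟩
      have hlt : 𝒞₂.card < k := by
        rw [hcard₂]; omega
      obtain ⟨𝒞', h𝒞'sub, S', hS'mem, hS'bd, hgood⟩ := ih 𝒞₂.card hlt 𝒞₂ rfl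
      have hvS' : v ∉ S' := by
        intro hv
        obtain ⟨f, hf, hvf⟩ := hS'mem v hv
        rw [h𝒞₂, Finset.mem_sdiff] at hf
        exact hf.2 (Finset.mem_filter.mpr ⟨hf.1, hvf⟩)
      refine ⟨𝒞', h𝒞'sub.trans (by rw [h𝒞₂]; exact Finset.sdiff_subset), insert v S', ?_, ?_, hgood⟩
      · intro w hw
        rcases Finset.mem_insert.mp hw with rfl | hw
        · exact ⟨f₀, hf₀, hvf₀⟩
        · obtain ⟨f, hf, hwf⟩ := hS'mem w hw
          exact ⟨f, (h𝒞₂ ▸ Finset.sdiff_subset) hf, hwf⟩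
      · rw [Finset.sum_insert hvS']
        have h1 : (𝒞.card : ℝ) = (B.card : ℝ) + (𝒞₂.card : ℝ) := by
          have hble : B.card ≤ k := hk ▸ Finset.card_le_card hBsub
          have : B.card + 𝒞₂.card = 𝒞.card := by rw [hcard₂, hk]; omega
          push_cast [← this]; ring
        have h2 : (B.card : ℝ) ≤ γ * G.degree v := le_of_lt hvlt
        linarith
    · push_neg at hbad
      refine ⟨𝒞, Finset.Subset.refl _, ∅, by simp, by simp, ?_⟩
      intro v hvh hex
      exact hbad v hvh hex


theorem statement_7 {A V : Type*} [Fintype A] [Fintype V] [DecidableEq V]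
    (p n h : ℕ) (hh : 1 ≤ h) (γ : ℝ) (hγ0 : 0 < γ) (hγ1 : γ < 1)
    (H : SimpleGraph A) (hnoiso : ∀ a : A, ∃ b : A, H.Adj a b)
    (G : SimpleGraph V) (hV : Fintype.card V = n)
    (hdeg : Degenerate G p)
    (𝒞 : Finset (A → V)) (h𝒞 : EdgeDisjointCopies H G 𝒞) :
    ∃ 𝒞' ⊆ 𝒞, (𝒞.card : ℝ) - 2 * γ * p * n ≤ (𝒞'.card : ℝ) ∧
      ∀ v : V, h ≤ G.degree v → (∃ f ∈ 𝒞', v ∈ Set.range f) →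
        γ * G.degree v ≤ ((𝒞'.filter fun f => v ∈ Set.range f).card : ℝ) := by
  obtain ⟨𝒞', hsub, S, hSmem, hSbd, hgood⟩ := prune_aux G h γ 𝒞.card 𝒞 rfl
  refine ⟨𝒞', hsub, ?_, fun v hv hex => ?_⟩
  swap
  · have := hgood v hv hex
    convert this using 4
  have hdegsum : (∑ v ∈ (Finset.univ : Finset V), (G.degree v : ℝ)) ≤ 2 * p * n := by
    have h1 : ∀ v : V, G.degree v = ((Finset.univ : Finset V).filter fun u => G.Adj v u).card := by
      intro v
      simp [SimpleGraph.degree, SimpleGraph.neighborFinset_eq_filter]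
    have h2 := degen_sum G p hdeg (Fintype.card V) Finset.univ (by simp)
    calc (∑ v ∈ (Finset.univ : Finset V), (G.degree v : ℝ))
        = ((∑ v ∈ (Finset.univ : Finset V),
            ((Finset.univ : Finset V).filter fun u => G.Adj v u).card : ℕ) : ℝ) := by
          push_cast
          exact Finset.sum_congr rfl fun v _ => by rw [h1 v]
      _ ≤ ((2 * p * Fintype.card V : ℕ) : ℝ) := by exact_mod_cast h2
      _ = 2 * p * n := by rw [hV]; push_cast; ring
  have hsle : (∑ v ∈ S, (G.degree v : ℝ)) ≤ 2 * p * n := by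
    refine le_trans (Finset.sum_le_sum_of_subset_of_nonneg (Finset.subset_univ S) ?_) hdegsum
    intro i _ _; positivity
  have : γ * (∑ v ∈ S, (G.degree v : ℝ)) ≤ γ * (2 * p * n) :=
    mul_le_mul_of_nonneg_left hsle (le_of_lt hγ0)
  linarith
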